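/- Let V be a finite vertex set, let k be a positive integer, and let C be a spanning subgraph of a graph G on V such that λ(x,y;C) ≥ min{λ(x,y;G), k} for all vertices x, y ∈ V. Then every l-cut S of C with l < k is an l-cut of G, and for every such S the graphs C − S and G − S (obtained by deleting the edges in S) have the same connected components: for all u, v ∈ V, u and v are connected in C − S if and only if they are connected in G − S. -/

import Mathlib

/-- The local edge-connectivity `λ(x,y;G)`: the maximum number of pairwise
edge-disjoint paths between `x` and `y` in `G`. -/
noncomputable def localEdgeConn {V : Type*} (G : SimpleGraph V) (x y : V) : ℕ :=
  sSup {n : ℕ | ∃ P : Fin n → G.Path x y, Function.Injective P ∧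
    Pairwise fun i j => ∀ e, e ∈ (P i).1.edges → e ∉ (P j).1.edges}

/-- `S` is an `l`-cut of `G`: `S` is a set of `l` edges of `G` whose removal leaves a
graph with more connected components than `G`. -/
def IsCut {V : Type*} (G : SimpleGraph V) (S : Finset (Sym2 V)) (l : ℕ) : Prop :=
  (S : Set (Sym2 V)) ⊆ G.edgeSet ∧ S.card = l ∧
    Nat.card G.ConnectedComponent <
      Nat.card (G.deleteEdges (S : Set (Sym2 V))).ConnectedComponent

open SimpleGraph

namespace StmtAux

variable {V : Type*}

/-- The defining set of `localEdgeConn`. -/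
def EDPSet (G : SimpleGraph V) (x y : V) : Set ℕ :=
  {n : ℕ | ∃ P : Fin n → G.Path x y, Function.Injective P ∧
    Pairwise fun i j => ∀ e, e ∈ (P i).1.edges → e ∉ (P j).1.edges}

lemma localEdgeConn_eq (G : SimpleGraph V) (x y : V) :
    localEdgeConn G x y = sSup (EDPSet G x y) := rfl

lemma zero_mem (G : SimpleGraph V) (x y : V) : 0 ∈ EDPSet G x y := by
  refine ⟨Fin.elim0, ?_, ?_⟩
  · intro i; exact i.elim0
  · intro i; exact i.elim0

lemma bddAbove [Fintype V] (G : SimpleGraph V) (x y : V) : BddAbove (EDPSet G x y) := by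
  classical
  refine ⟨Fintype.card (G.Path x y), fun n hn => ?_⟩
  obtain ⟨P, hinj, -⟩ := hn
  simpa using Fintype.card_le_of_injective P hinj

lemma mem_le_conn [Fintype V] {G : SimpleGraph V} {x y : V} {n : ℕ}
    (h : n ∈ EDPSet G x y) : n ≤ localEdgeConn G x y :=
  le_csSup (bddAbove G x y) h

lemma conn_mem [Fintype V] (G : SimpleGraph V) (x y : V) :
    localEdgeConn G x y ∈ EDPSet G x y :=
  Nat.sSup_mem ⟨0, zero_mem G x y⟩ (bddAbove G x y)

lemma transfer_congr {G H : SimpleGraph V} {x y : V} {p q : G.Walk x y} (h : p = q)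
    (hp : ∀ e ∈ p.edges, e ∈ H.edgeSet) (hq : ∀ e ∈ q.edges, e ∈ H.edgeSet) :
    p.transfer H hp = q.transfer H hq := by subst h; rfl

lemma edges_ne_nil {G : SimpleGraph V} {x y : V} (hxy : x ≠ y) (p : G.Walk x y) :
    p.edges ≠ [] := by
  cases p with
  | nil => exact absurd rfl hxy
  | cons h q => simp

/-- Core lemma: every edge of `G` outside `S` has its endpoints
connected in `C − S`. -/
lemma key [Fintype V] {k : ℕ} {G C : SimpleGraph V} (hCG : C ≤ G)
    (hlam : ∀ x y : V, min (localEdgeConn G x y) k ≤ localEdgeConn C x y)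
    {S : Finset (Sym2 V)} (hSk : S.card < k) {x y : V}
    (hadj : G.Adj x y) (heS : s(x, y) ∉ S) :
    (C.deleteEdges (S : Set (Sym2 V))).Reachable x y := by
  classical
  by_cases hC : C.Adj x y
  · exact SimpleGraph.Adj.reachable (by simp [SimpleGraph.deleteEdges_adj, hC, heS])
  by_contra hreach
  obtain ⟨P, hinj, hdis⟩ := conn_mem C x y
  -- every x-y path of C meets S
  have hhit : ∀ i : Fin (localEdgeConn C x y), ∃ e ∈ (P i).1.edges, e ∈ S := by
    intro i
    by_contra hcon
    push_neg at hcon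
    exact hreach ⟨(P i).1.toDeleteEdges _ (fun e he => by simpa using hcon e he)⟩
  choose f hf1 hf2 using hhit
  have hfinj : Function.Injective f := by
    intro i j hij
    by_contra hne
    exact hdis hne (f i) (hf1 i) (hij ▸ hf1 j)
  have hnS : localEdgeConn C x y ≤ S.card := by
    have h1 : Fintype.card (Fin (localEdgeConn C x y)) ≤ Fintype.card {e // e ∈ S} :=
      Fintype.card_le_of_injective (fun i => ⟨f i, hf2 i⟩)
        (fun i j h => hfinj (congrArg Subtype.val h))
    simpa [Fintype.card_coe] using h1
  -- transfer the paths to G and add the edge xy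
  have hCe : ∀ i : Fin (localEdgeConn C x y), ∀ e ∈ (P i).1.edges, e ∈ G.edgeSet :=
    fun i e he => edgeSet_mono hCG ((P i).1.edges_subset_edgeSet he)
  have hsxy_not : ∀ i : Fin (localEdgeConn C x y), s(x, y) ∉ (P i).1.edges := fun i h =>
    hC ((SimpleGraph.mem_edgeSet C).mp ((P i).1.edges_subset_edgeSet h))
  set Q : Fin (localEdgeConn C x y + 1) → G.Path x y :=
    Fin.cons (SimpleGraph.Path.singleton hadj)
      (fun i => ⟨(P i).1.transfer G (hCe i), (P i).2.transfer (hCe i)⟩) with hQ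
  have hQ0 : (Q 0).1.edges = [s(x, y)] := by
    simp [hQ, Fin.cons_zero, SimpleGraph.Path.singleton]
  have hQs : ∀ i : Fin (localEdgeConn C x y), (Q i.succ).1.edges = (P i).1.edges := by
    intro i
    simp only [hQ, Fin.cons_succ]
    exact (P i).1.edges_transfer (hCe i)
  have hQdis : Pairwise fun i j : Fin (localEdgeConn C x y + 1) =>
      ∀ e, e ∈ (Q i).1.edges → e ∉ (Q j).1.edges := by
    intro a b hab
    induction a using Fin.cases with
    | zero =>
      induction b using Fin.cases with
      | zero => exact absurd rfl hab
      | succ b =>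
        intro e he1 he2
        rw [hQ0] at he1
        rw [hQs] at he2
        simp only [List.mem_singleton] at he1
        exact hsxy_not b (he1 ▸ he2)
    | succ a =>
      induction b using Fin.cases with
      | zero =>
        intro e he1 he2
        rw [hQs] at he1
        rw [hQ0] at he2
        simp only [List.mem_singleton] at he2
        exact hsxy_not a (he2 ▸ he1)
      | succ b =>
        intro e he1 he2
        rw [hQs] at he1 he2
        have hne : a ≠ b := fun h => hab (by rw [h])
        exact hdis hne e he1 he2
  have hQinj : Function.Injective Q := by
    intro a b hab
    by_contra hne
    obtain ⟨e, he⟩ := List.exists_mem_of_ne_nil _ (edges_ne_nil hadj.ne (Q a).1)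
    exact hQdis hne e he (hab ▸ he)
  have h1 : localEdgeConn C x y + 1 ≤ localEdgeConn G x y := mem_le_conn ⟨Q, hQinj, hQdis⟩
  have h2 := hlam x y
  rw [min_def] at h2
  split_ifs at h2 <;> omega

end StmtAux

/-- If `C` is a spanning subgraph of `G` with `λ(x,y;C) ≥ min{λ(x,y;G), k}` for all
vertices `x, y`, then every `l`-cut `S` of `C` with `l < k` is an `l`-cut of `G`, and
for every such `S` the graphs `C − S` and `G − S` (obtained by deleting the edges of
`S`) have the same connected components. -/
theorem stmt_5 {V : Type*} [Fintype V] (k : ℕ) (hk : 0 < k)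
    (G C : SimpleGraph V) (hCG : C ≤ G)
    (hlam : ∀ x y : V, min (localEdgeConn G x y) k ≤ localEdgeConn C x y)
    (S : Finset (Sym2 V)) (l : ℕ) (hl : l < k) (hcut : IsCut C S l) :
    IsCut G S l ∧
      ∀ u v : V, (C.deleteEdges (S : Set (Sym2 V))).Reachable u v ↔
        (G.deleteEdges (S : Set (Sym2 V))).Reachable u v := by
  classical
  obtain ⟨hS_sub, hS_card, hS_count⟩ := hcut
  have hSk : S.card < k := by omega
  have hle : C.deleteEdges (S : Set (Sym2 V)) ≤ G.deleteEdges (S : Set (Sym2 V)) := by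
    intro a b hab
    simp only [SimpleGraph.deleteEdges_adj] at hab ⊢
    exact ⟨hCG hab.1, hab.2⟩
  have main : ∀ u v : V, (C.deleteEdges (S : Set (Sym2 V))).Reachable u v ↔
      (G.deleteEdges (S : Set (Sym2 V))).Reachable u v := by
    intro u v
    constructor
    · intro h; exact h.mono hle
    · intro h
      obtain ⟨w⟩ := h
      induction w with
      | nil => exact SimpleGraph.Reachable.refl _
      | @cons a b c h p ih =>
        have h' : G.Adj a b ∧ s(a, b) ∉ (S : Set (Sym2 V)) := by
          simpa [SimpleGraph.deleteEdges_adj] using h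
        exact (StmtAux.key hCG hlam hSk h'.1 (by simpa using h'.2)).trans ih
  -- the components of C−S and G−S are in bijection
  have hbij : Function.Bijective
      (SimpleGraph.ConnectedComponent.map (SimpleGraph.Hom.ofLE hle)) := by
    constructor
    · intro c d
      induction c using SimpleGraph.ConnectedComponent.ind with | _ u =>
      induction d using SimpleGraph.ConnectedComponent.ind with | _ v =>
      intro h
      rw [SimpleGraph.ConnectedComponent.map_mk, SimpleGraph.ConnectedComponent.map_mk] at h
      have hr := SimpleGraph.ConnectedComponent.eq.mp h
      simp only [SimpleGraph.Hom.ofLE_apply] at hr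
      exact SimpleGraph.ConnectedComponent.sound ((main u v).mpr hr)
    · intro c
      induction c using SimpleGraph.ConnectedComponent.ind with | _ u =>
      exact ⟨(C.deleteEdges (S : Set (Sym2 V))).connectedComponentMk u, by
        rw [SimpleGraph.ConnectedComponent.map_mk]; rfl⟩
  have hcardEq : Nat.card ((C.deleteEdges (S : Set (Sym2 V))).ConnectedComponent) =
      Nat.card ((G.deleteEdges (S : Set (Sym2 V))).ConnectedComponent) :=
    Nat.card_eq_of_bijective _ hbij
  have hGC : Nat.card G.ConnectedComponent ≤ Nat.card C.ConnectedComponent := by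
    have hsurj : Function.Surjective
        (SimpleGraph.ConnectedComponent.map (SimpleGraph.Hom.ofLE hCG)) := by
      intro c
      induction c using SimpleGraph.ConnectedComponent.ind with | _ u =>
      exact ⟨C.connectedComponentMk u, by rw [SimpleGraph.ConnectedComponent.map_mk]; rfl⟩
    exact Nat.card_le_card_of_surjective _ hsurj
  exact ⟨⟨fun e he => SimpleGraph.edgeSet_mono hCG (hS_sub he), hS_card, by omega⟩, main⟩
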